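/- Let v ∈ R^q, y ∈ R^q, and let ∅ ⊂ U_1 ⊂ U_2 ⊂ ... ⊂ U_k ⊂ [q] be a strictly increasing chain of subsets with indicator vectors u_i = 1_{U_i}. Let λ_1, ..., λ_k ≥ 0 with Σ_i λ_i = 1. Then for all sufficiently small t > 0, d_tr(y + t·Σ_i λ_i u_i, v) = Σ_i λ_i · d_tr(y + t·u_i, v). -/

import Mathlib

/-- The tropical symmetric distance on `ℝ^q`. -/
noncomputable def dtr (q : ℕ) [NeZero q] (x y : Fin q → ℝ) : ℝ :=
  (Finset.univ.sup' Finset.univ_nonempty fun i => y i - x i) -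
  (Finset.univ.inf' Finset.univ_nonempty fun i => y i - x i)

private lemma sup_shift {q : ℕ} [NeZero q] (g w : Fin q → ℝ) (M δ t : ℝ)
    (hMub : ∀ a, g a ≤ M) (hδ : ∀ a, g a ≠ M → δ ≤ M - g a)
    (hw0 : ∀ a, 0 ≤ w a) (a0 : Fin q) (hw1 : w a0 ≤ 1)
    (ha0 : g a0 = M) (hmin : ∀ a, g a = M → w a0 ≤ w a)
    (ht : 0 < t) (htδ : t < δ) :
    Finset.univ.sup' Finset.univ_nonempty (fun a => g a - t * w a) = M - t * w a0 := by
  apply le_antisymm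
  · apply Finset.sup'_le
    intro a _
    by_cases h : g a = M
    · have := hmin a h
      rw [h]; nlinarith
    · have h1 := hδ a h
      have h2 := hw0 a
      nlinarith
  · have := Finset.le_sup' (fun a => g a - t * w a) (Finset.mem_univ a0)
    simp only [ha0] at this; exact this

private lemma inf_shift {q : ℕ} [NeZero q] (g w : Fin q → ℝ) (m δ t : ℝ)
    (hmlb : ∀ a, m ≤ g a) (hδ : ∀ a, g a ≠ m → δ ≤ g a - m)
    (hw1 : ∀ a, w a ≤ 1) (b0 : Fin q) (hw0 : 0 ≤ w b0)
    (hb0 : g b0 = m) (hmax : ∀ a, g a = m → w a ≤ w b0)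
    (ht : 0 < t) (htδ : t < δ) :
    Finset.univ.inf' Finset.univ_nonempty (fun a => g a - t * w a) = m - t * w b0 := by
  apply le_antisymm
  · have := Finset.inf'_le (fun a => g a - t * w a) (Finset.mem_univ b0)
    simp only [hb0] at this; exact this
  · apply Finset.le_inf'
    intro a _
    by_cases h : g a = m
    · have := hmax a h
      rw [h]; nlinarith
    · have h1 := hδ a h
      have h2 := hw1 a
      nlinarith

theorem stmt13 (q k : ℕ) [NeZero q] (v y : Fin q → ℝ)
    (U : Fin k → Set (Fin q))
    -- `∅ ⊂ U 1 ⊂ U 2 ⊂ ⋯ ⊂ U k ⊂ [q]`: a strictly increasing chain of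
    -- nonempty proper subsets
    (hchain : ∀ i j : Fin k, i < j → U i ⊂ U j)
    (hne : ∀ i, (U i).Nonempty) (hproper : ∀ i, U i ≠ Set.univ)
    (lam : Fin k → ℝ) (hlam : ∀ i, 0 ≤ lam i) (hsum : ∑ i, lam i = 1) :
    ∃ t₀ > (0 : ℝ), ∀ t : ℝ, 0 < t → t < t₀ →
      dtr q (y + t • ∑ i, lam i • (U i).indicator (fun _ => (1 : ℝ))) v =
        ∑ i, lam i * dtr q (y + t • (U i).indicator (fun _ => (1 : ℝ))) v := by
  classical
  set g : Fin q → ℝ := fun a => v a - y a with hgdef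
  set uu : Fin k → Fin q → ℝ := fun i => (U i).indicator (fun _ => (1 : ℝ)) with huu
  set W : Fin q → ℝ := fun a => ∑ i, lam i * uu i a with hW
  -- basic facts about indicators
  have hu0 : ∀ i a, 0 ≤ uu i a := by
    intro i a
    by_cases h : a ∈ U i
    · simp [huu, Set.indicator_of_mem h]
    · simp [huu, Set.indicator_of_notMem h]
  have hu1 : ∀ i a, uu i a ≤ 1 := by
    intro i a
    by_cases h : a ∈ U i
    · simp [huu, Set.indicator_of_mem h]
    · simp [huu, Set.indicator_of_notMem h]
  have hW0 : ∀ a, 0 ≤ W a :=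
    fun a => Finset.sum_nonneg fun i _ => mul_nonneg (hlam i) (hu0 i a)
  have hW1 : ∀ a, W a ≤ 1 := by
    intro a
    calc W a ≤ ∑ i, lam i * 1 :=
          Finset.sum_le_sum fun i _ => mul_le_mul_of_nonneg_left (hu1 i a) (hlam i)
      _ = 1 := by simp [hsum]
  have humono : ∀ (a b : Fin q), (∀ i, a ∈ U i → b ∈ U i) → ∀ i, uu i a ≤ uu i b := by
    intro a b h i
    by_cases ha : a ∈ U i
    · simp [huu, Set.indicator_of_mem ha, Set.indicator_of_mem (h i ha)]
    · simpa [huu, Set.indicator_of_notMem ha] using hu0 i b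
  -- chain structure: membership profiles are totally ordered
  have hup : ∀ (a : Fin q) (i j : Fin k), i ≤ j → a ∈ U i → a ∈ U j := by
    intro a i j hij hi
    rcases lt_or_eq_of_le hij with h | h
    · exact (hchain i j h).subset hi
    · exact h ▸ hi
  have hcomp : ∀ a b : Fin q, (∀ i, a ∈ U i → b ∈ U i) ∨ (∀ i, b ∈ U i → a ∈ U i) := by
    intro a b
    by_cases h : ∀ i, a ∈ U i → b ∈ U i
    · exact Or.inl h
    · right
      push_neg at h
      obtain ⟨i, hai, hbi⟩ := h
      intro j hbj
      rcases le_total j i with hji | hij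
      · exact absurd (hup b j i hji hbj) hbi
      · exact hup a i j hij hai
  set n : Fin q → ℕ := fun a => (Finset.univ.filter (fun i => a ∈ U i)).card with hn
  have hkey : ∀ a b : Fin q, n a ≤ n b → ∀ i, a ∈ U i → b ∈ U i := by
    intro a b hnab
    rcases hcomp a b with h | h
    · exact h
    · have hsub : Finset.univ.filter (fun i => b ∈ U i) ⊆
          Finset.univ.filter (fun i => a ∈ U i) := by
        intro i hi
        simp only [Finset.mem_filter, Finset.mem_univ, true_and] at hi ⊢
        exact h i hi
      have heq := Finset.eq_of_subset_of_card_le hsub hnab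
      intro i hai
      have hmem : i ∈ Finset.univ.filter (fun i => a ∈ U i) := by
        simp [hai]
      rw [← heq] at hmem
      simpa using hmem
  -- extremal sets and tie-breaking elements
  set M : ℝ := Finset.univ.sup' Finset.univ_nonempty g with hM
  set m : ℝ := Finset.univ.inf' Finset.univ_nonempty g with hm
  have hMub : ∀ a, g a ≤ M := fun a => Finset.le_sup' g (Finset.mem_univ a)
  have hmlb : ∀ a, m ≤ g a := fun a => Finset.inf'_le g (Finset.mem_univ a)
  have hAne : (Finset.univ.filter (fun a => g a = M)).Nonempty := by
    obtain ⟨a, -, ha⟩ := Finset.exists_mem_eq_sup' Finset.univ_nonempty g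
    exact ⟨a, by simp [ha.symm, hM]⟩
  have hBne : (Finset.univ.filter (fun a => g a = m)).Nonempty := by
    obtain ⟨a, -, ha⟩ := Finset.exists_mem_eq_inf' Finset.univ_nonempty g
    exact ⟨a, by simp [ha.symm, hm]⟩
  obtain ⟨a0, ha0A, ha0min⟩ := Finset.exists_min_image _ n hAne
  obtain ⟨b0, hb0B, hb0max⟩ := Finset.exists_max_image _ n hBne
  have ha0M : g a0 = M := by simpa using (Finset.mem_filter.mp ha0A).2
  have hb0m : g b0 = m := by simpa using (Finset.mem_filter.mp hb0B).2
  have ha0key : ∀ a, g a = M → ∀ i, a0 ∈ U i → a ∈ U i := by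
    intro a ha
    exact hkey a0 a (ha0min a (by simp [ha]))
  have hb0key : ∀ a, g a = m → ∀ i, a ∈ U i → b0 ∈ U i := by
    intro a ha
    exact hkey a b0 (hb0max a (by simp [ha]))
  have huminA : ∀ i, ∀ a, g a = M → uu i a0 ≤ uu i a :=
    fun i a ha => humono a0 a (ha0key a ha) i
  have humaxB : ∀ i, ∀ a, g a = m → uu i a ≤ uu i b0 :=
    fun i a ha => humono a b0 (hb0key a ha) i
  have hWminA : ∀ a, g a = M → W a0 ≤ W a := by
    intro a ha
    exact Finset.sum_le_sum fun i _ =>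
      mul_le_mul_of_nonneg_left (huminA i a ha) (hlam i)
  have hWmaxB : ∀ a, g a = m → W a ≤ W b0 := by
    intro a ha
    exact Finset.sum_le_sum fun i _ =>
      mul_le_mul_of_nonneg_left (humaxB i a ha) (hlam i)
  -- the threshold
  set δ1 : ℝ := Finset.univ.inf' Finset.univ_nonempty
      (fun a => if g a = M then 1 else M - g a) with hδ1
  set δ2 : ℝ := Finset.univ.inf' Finset.univ_nonempty
      (fun a => if g a = m then 1 else g a - m) with hδ2
  have hδ1pos : 0 < δ1 := by
    rw [hδ1, Finset.lt_inf'_iff]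
    intro a _
    by_cases h : g a = M
    · simp [h]
    · simp only [h, if_false]
      exact sub_pos.mpr (lt_of_le_of_ne (hMub a) h)
  have hδ2pos : 0 < δ2 := by
    rw [hδ2, Finset.lt_inf'_iff]
    intro a _
    by_cases h : g a = m
    · simp [h]
    · simp only [h, if_false]
      exact sub_pos.mpr (lt_of_le_of_ne (hmlb a) (Ne.symm h))
  have hδ1spec : ∀ a, g a ≠ M → δ1 ≤ M - g a := by
    intro a h
    have := Finset.inf'_le (f := fun a => if g a = M then 1 else M - g a)
      (Finset.mem_univ a)
    simpa [h, ← hδ1] using this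
  have hδ2spec : ∀ a, g a ≠ m → δ2 ≤ g a - m := by
    intro a h
    have := Finset.inf'_le (f := fun a => if g a = m then 1 else g a - m)
      (Finset.mem_univ a)
    simpa [h, ← hδ2] using this
  refine ⟨min δ1 δ2, lt_min hδ1pos hδ2pos, ?_⟩
  intro t ht htt0
  have htδ1 : t < δ1 := lt_of_lt_of_le htt0 (min_le_left _ _)
  have htδ2 : t < δ2 := lt_of_lt_of_le htt0 (min_le_right _ _)
  -- rewrite both sides using the shift lemmas
  have hfun : ∀ F : Fin q → ℝ,
      (fun a => v a - (y + t • F) a) = fun a => g a - t * F a := by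
    intro F
    funext a
    simp only [hgdef, Pi.add_apply, Pi.smul_apply, smul_eq_mul]
    ring
  have hsumapp : (fun a => (∑ i, lam i • uu i) a) = W := by
    funext a
    simp [hW, Finset.sum_apply]
  have hLHS : dtr q (y + t • ∑ i, lam i • uu i) v = (M - t * W a0) - (m - t * W b0) := by
    rw [dtr]
    have h1 : (fun a => v a - (y + t • ∑ i, lam i • uu i) a)
        = fun a => g a - t * W a := by
      rw [hfun]
      funext a
      rw [show (∑ i, lam i • uu i) a = W a from congrFun hsumapp a]
    rw [show (fun i => v i - (y + t • ∑ i, lam i • uu i) i)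
        = fun a => g a - t * W a from h1]
    rw [sup_shift g W M δ1 t hMub hδ1spec hW0 a0 (hW1 a0) ha0M hWminA ht htδ1,
        inf_shift g W m δ2 t hmlb hδ2spec hW1 b0 (hW0 b0) hb0m hWmaxB ht htδ2]
  have hRHS : ∀ i, dtr q (y + t • uu i) v = (M - t * uu i a0) - (m - t * uu i b0) := by
    intro i
    rw [dtr]
    rw [show (fun a => v a - (y + t • uu i) a) = fun a => g a - t * uu i a from hfun (uu i)]
    rw [sup_shift g (uu i) M δ1 t hMub hδ1spec (hu0 i) a0 (hu1 i a0) ha0M (huminA i) ht htδ1,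
        inf_shift g (uu i) m δ2 t hmlb hδ2spec (hu1 i) b0 (hu0 i b0) hb0m (humaxB i) ht htδ2]
  rw [hLHS]
  have : ∑ i, lam i * dtr q (y + t • uu i) v
      = ∑ i, lam i * ((M - t * uu i a0) - (m - t * uu i b0)) := by
    apply Finset.sum_congr rfl
    intro i _
    rw [hRHS i]
  rw [this]
  have hexp : ∑ i, lam i * ((M - t * uu i a0) - (m - t * uu i b0))
      = (∑ i, lam i) * (M - m) - t * (∑ i, lam i * uu i a0)
        + t * (∑ i, lam i * uu i b0) := by
    rw [Finset.sum_mul, Finset.mul_sum, Finset.mul_sum, ← Finset.sum_sub_distrib,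
      ← Finset.sum_add_distrib]
    apply Finset.sum_congr rfl
    intro i _
    ring
  rw [hexp, hsum]
  have hWa0 : W a0 = ∑ i, lam i * uu i a0 := rfl
  have hWb0 : W b0 = ∑ i, lam i * uu i b0 := rfl
  rw [← hWa0, ← hWb0]
  ring
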